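/- Let k ≥ 1 and j ≥ 1 be integers, let t be an integer with 0 ≤ t ≤ 2k, and let F : 𝔽₂ʲ → 𝔽₂ be a Boolean function. For n ≥ 1 define A_n = Σ_{l=0}^{n} ( Σ_{m=0}^{j} C_m(F)(-1)^{Σ_{i=0}^{t} C(t,i)C(l+m,2k−i)} ) C(n,l) and B_n = Σ_{l=0}^{n+1} ( Σ_{m=0}^{j} C_m(F)(-1)^{Σ_{i=0}^{t} C(t,i)C(l+m,2k+1−i)} ) C(n+1,l), so that A_n = S( [Σ_{i=0}^{t} C(t,i)σ_{n+j,2k−i}] + F ) and B_n = S( [Σ_{i=0}^{t} C(t,i)σ_{n+1+j,2k+1−i}] + F ) whenever these Boolean functions are defined. Then A_n = B_n for every positive integer n if and only if F is balanced, i.e. S(F) = 0. -/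

import Mathlib

/-- Exponential sum of a Boolean function in `N` variables. -/
def expSum {N : ℕ} (G : (Fin N → ZMod 2) → ZMod 2) : ℤ :=
  ∑ x : Fin N → ZMod 2, (-1 : ℤ) ^ (G x).val

/-- Elementary symmetric Boolean polynomial of degree `k` in `n` variables
(`sigma n 0` is the constant `1`). -/
def sigma (n k : ℕ) (x : Fin n → ZMod 2) : ZMod 2 :=
  ∑ A ∈ Finset.powersetCard k (Finset.univ : Finset (Fin n)), ∏ i ∈ A, x i

/-- Hamming weight of a Boolean vector. -/
def wt {j : ℕ} (x : Fin j → ZMod 2) : ℕ :=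
  (Finset.univ.filter (fun i => x i = 1)).card

/-- The weight-coefficients `C_m(F) = Σ_{wt(x)=m} (-1)^{F(x)}` of a Boolean function. -/
def coefC {j : ℕ} (F : (Fin j → ZMod 2) → ZMod 2) (m : ℕ) : ℤ :=
  ∑ x ∈ Finset.univ.filter (fun x : Fin j → ZMod 2 => wt x = m), (-1 : ℤ) ^ (F x).val

open Finset

/-! ### Auxiliary lemmas -/

lemma neg_one_pow_val_add (a b : ZMod 2) :
    ((-1 : ℤ)) ^ ((a + b).val) = (-1 : ℤ) ^ a.val * (-1 : ℤ) ^ b.val := by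
  revert a b; decide

lemma neg_one_pow_val_natCast (n : ℕ) :
    ((-1 : ℤ)) ^ (((n : ZMod 2)).val) = (-1 : ℤ) ^ n := by
  rw [ZMod.val_natCast]
  conv_rhs => rw [← Nat.div_add_mod n 2, pow_add, pow_mul]
  norm_num

lemma sigma_eq_choose (N r : ℕ) (x : Fin N → ZMod 2) :
    sigma N r x = ((wt x).choose r : ZMod 2) := by
  classical
  unfold sigma wt
  set S := Finset.univ.filter (fun i => x i = 1) with hS
  have hprod : ∀ A : Finset (Fin N), (∏ i ∈ A, x i) = if A ⊆ S then 1 else 0 := by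
    intro A
    by_cases h : A ⊆ S
    · rw [if_pos h]
      apply Finset.prod_eq_one
      intro i hi
      have := h hi
      simp only [hS, mem_filter] at this
      exact this.2
    · rw [if_neg h]
      obtain ⟨i, hiA, hiS⟩ := Finset.not_subset.mp h
      apply Finset.prod_eq_zero hiA
      have h1 : x i ≠ 1 := by
        intro hx; exact hiS (by simp [hS, hx])
      have h0 : ∀ a : ZMod 2, a ≠ 1 → a = 0 := by decide
      exact h0 _ h1
  rw [Finset.sum_congr rfl (fun A _ => hprod A)]
  rw [Finset.sum_boole]
  have : (powersetCard r univ).filter (fun A => A ⊆ S) = powersetCard r S := by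
    ext A
    simp only [mem_filter, mem_powersetCard, subset_univ, true_and]
    tauto
  rw [this, Finset.card_powersetCard]

def idxEquiv (n j : ℕ) : Fin j ⊕ Fin n ≃ Fin (n + j) :=
  finSumFinEquiv.trans (finCongr (Nat.add_comm j n))

def splitEquiv (n j : ℕ) : ((Fin j → ZMod 2) × (Fin n → ZMod 2)) ≃ (Fin (n + j) → ZMod 2) :=
  (Equiv.sumArrowEquivProdArrow (Fin j) (Fin n) (ZMod 2)).symm.trans
    (Equiv.arrowCongr (idxEquiv n j) (Equiv.refl _))

lemma splitEquiv_apply (n j : ℕ) (y : Fin j → ZMod 2) (z : Fin n → ZMod 2) (i : Fin (n + j)) :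
    splitEquiv n j (y, z) i = Sum.elim y z ((idxEquiv n j).symm i) := rfl

lemma splitEquiv_castLE (n j : ℕ) (y : Fin j → ZMod 2) (z : Fin n → ZMod 2) (i : Fin j) :
    splitEquiv n j (y, z) (Fin.castLE (Nat.le_add_left j n) i) = y i := by
  rw [splitEquiv_apply]
  have : (idxEquiv n j).symm (Fin.castLE (Nat.le_add_left j n) i) = Sum.inl i := by
    have h1 : (finCongr (Nat.add_comm j n)).symm (Fin.castLE (Nat.le_add_left j n) i)
        = Fin.castAdd n i := by
      ext; simp
    simp only [idxEquiv, Equiv.symm_trans_apply, h1, finSumFinEquiv_symm_apply_castAdd]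
  rw [this, Sum.elim_inl]

lemma wt_splitEquiv (n j : ℕ) (y : Fin j → ZMod 2) (z : Fin n → ZMod 2) :
    wt (splitEquiv n j (y, z)) = wt y + wt z := by
  unfold wt
  rw [Finset.card_filter, Finset.card_filter, Finset.card_filter]
  rw [← Equiv.sum_comp (idxEquiv n j) (fun i => if splitEquiv n j (y, z) i = 1 then 1 else 0)]
  rw [Fintype.sum_sum_type]
  congr 1 <;> apply Finset.sum_congr rfl <;> intro i _ <;>
    simp [splitEquiv_apply, Equiv.symm_apply_apply]

lemma wt_le {n : ℕ} (z : Fin n → ZMod 2) : wt z ≤ n := by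
  unfold wt
  calc (Finset.univ.filter _).card ≤ (Finset.univ : Finset (Fin n)).card :=
        Finset.card_filter_le _ _
    _ = n := by simp

lemma card_wt (n l : ℕ) :
    ((Finset.univ : Finset (Fin n → ZMod 2)).filter (fun z => wt z = l)).card = n.choose l := by
  classical
  have h : n.choose l = ((powersetCard l (Finset.univ : Finset (Fin n)))).card := by
    rw [Finset.card_powersetCard]; simp
  rw [h]
  have hset : ∀ A : Finset (Fin n),
      Finset.univ.filter (fun i : Fin n => (if i ∈ A then (1 : ZMod 2) else 0) = 1) = A := by
    intro A
    ext i
    simp only [mem_filter, mem_univ, true_and]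
    constructor
    · intro h'; by_contra hi; simp [hi] at h'
    · intro h'; simp [h']
  refine Finset.card_bij' (fun z _ => Finset.univ.filter (fun i => z i = 1))
    (fun A _ => (fun i => if i ∈ A then (1 : ZMod 2) else 0)) ?_ ?_ ?_ ?_
  · intro z hz
    simp only [mem_filter, mem_univ, true_and] at hz
    simp [Finset.mem_powersetCard, ← hz, wt]
  · intro A hA
    simp only [Finset.mem_powersetCard] at hA
    refine mem_filter.mpr ⟨mem_univ _, ?_⟩
    unfold wt
    rw [← hA.2]
    congr 1
    ext i
    simp
  · intro z hz
    funext i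
    by_cases h1 : z i = 1
    · simp [h1]
    · have h0 : ∀ a : ZMod 2, a ≠ 1 → a = 0 := by decide
      simp [h1, h0 _ h1]
  · intro A hA
    exact hset A

lemma sum_wt_fiber {n : ℕ} (f : ℕ → ℤ) :
    ∑ z : Fin n → ZMod 2, f (wt z)
      = ∑ l ∈ Finset.range (n + 1), (n.choose l : ℤ) * f l := by
  classical
  rw [← Finset.sum_fiberwise_of_maps_to (g := wt) (t := Finset.range (n + 1))
      (fun z _ => Finset.mem_range.mpr (Nat.lt_succ_of_le (wt_le z)))]
  apply Finset.sum_congr rfl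
  intro l _
  have : ∀ z ∈ Finset.univ.filter (fun z : Fin n → ZMod 2 => wt z = l), f (wt z) = f l := by
    intro z hz
    rw [Finset.mem_filter] at hz
    rw [hz.2]
  rw [Finset.sum_congr rfl this, Finset.sum_const, ← card_wt n l]
  simp [mul_comm]

lemma sum_F_fiber {j : ℕ} (F : (Fin j → ZMod 2) → ZMod 2) (f : ℕ → ℤ) :
    ∑ y : Fin j → ZMod 2, f (wt y) * (-1 : ℤ) ^ (F y).val
      = ∑ m ∈ Finset.range (j + 1), f m * coefC F m := by
  classical
  rw [← Finset.sum_fiberwise_of_maps_to (g := wt) (t := Finset.range (j + 1))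
      (fun z _ => Finset.mem_range.mpr (Nat.lt_succ_of_le (wt_le z)))]
  apply Finset.sum_congr rfl
  intro m _
  rw [coefC, Finset.mul_sum]
  apply Finset.sum_congr rfl
  intro y hy
  rw [Finset.mem_filter] at hy
  rw [hy.2]

lemma expSum_split (n j : ℕ) (g : ℕ → ℕ) (F : (Fin j → ZMod 2) → ZMod 2) :
    expSum (fun x : Fin (n + j) → ZMod 2 =>
        ((g (wt x) : ZMod 2)) + F (fun i => x (Fin.castLE (Nat.le_add_left j n) i)))
      = ∑ l ∈ Finset.range (n + 1),
          (∑ m ∈ Finset.range (j + 1), coefC F m * (-1 : ℤ) ^ (g (l + m))) * (n.choose l : ℤ) := by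
  classical
  unfold expSum
  rw [← Equiv.sum_comp (splitEquiv n j)
      (fun x => (-1 : ℤ) ^ (((g (wt x) : ZMod 2)
        + F (fun i => x (Fin.castLE (Nat.le_add_left j n) i))).val))]
  rw [Fintype.sum_prod_type_right]
  have step : ∀ (z : Fin n → ZMod 2) (y : Fin j → ZMod 2),
      (-1 : ℤ) ^ (((g (wt (splitEquiv n j (y, z))) : ZMod 2)
        + F (fun i => splitEquiv n j (y, z) (Fin.castLE (Nat.le_add_left j n) i))).val)
      = (-1 : ℤ) ^ (g (wt y + wt z)) * (-1 : ℤ) ^ (F y).val := by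
    intro z y
    have hproj : (fun i => splitEquiv n j (y, z) (Fin.castLE (Nat.le_add_left j n) i)) = y :=
      funext (splitEquiv_castLE n j y z)
    rw [hproj, wt_splitEquiv, neg_one_pow_val_add, neg_one_pow_val_natCast]
  have h1 : ∀ z : Fin n → ZMod 2,
      (∑ y : Fin j → ZMod 2, (-1 : ℤ) ^ (((g (wt (splitEquiv n j (y, z))) : ZMod 2)
        + F (fun i => splitEquiv n j (y, z) (Fin.castLE (Nat.le_add_left j n) i))).val))
      = ∑ m ∈ Finset.range (j + 1), (-1 : ℤ) ^ (g (m + wt z)) * coefC F m := by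
    intro z
    rw [Finset.sum_congr rfl (fun y _ => step z y)]
    exact sum_F_fiber F (fun m => (-1 : ℤ) ^ (g (m + wt z)))
  rw [Finset.sum_congr rfl (fun z _ => h1 z)]
  rw [sum_wt_fiber (fun l => ∑ m ∈ Finset.range (j + 1), (-1 : ℤ) ^ (g (m + l)) * coefC F m)]
  apply Finset.sum_congr rfl
  intro l _
  rw [mul_comm]
  congr 1
  apply Finset.sum_congr rfl
  intro m _
  rw [mul_comm, Nat.add_comm m l]

lemma expSum_congr {N : ℕ} (G H : (Fin N → ZMod 2) → ZMod 2) (h : ∀ x, G x = H x) :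
    expSum G = expSum H := by
  unfold expSum
  exact Finset.sum_congr rfl fun x _ => by rw [h x]

lemma vand (t r w : ℕ) (h : t ≤ r) :
    ∑ i ∈ Finset.range (t + 1), t.choose i * w.choose (r - i) = (t + w).choose r := by
  rw [Nat.add_choose_eq, Finset.Nat.sum_antidiagonal_eq_sum_range_succ_mk]
  apply Finset.sum_subset (Finset.range_subset_range.mpr (by omega))
  intro i hi hni
  simp only [Finset.mem_range] at hi hni
  have : t < i := by omega
  simp [Nat.choose_eq_zero_of_lt this]

lemma key (k w : ℕ) :
    (-1 : ℤ) ^ (w.choose (2 * k + 1)) + (-1 : ℤ) ^ ((w + 1).choose (2 * k + 1))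
      = (-1 : ℤ) ^ (w.choose (2 * k)) + 1 := by
  have hp : (w + 1).choose (2 * k + 1) = w.choose (2 * k) + w.choose (2 * k + 1) :=
    Nat.choose_succ_succ w (2 * k)
  have himp : Odd (w.choose (2 * k + 1)) → Odd (w.choose (2 * k)) := by
    intro ho
    have heq : w.choose (2 * k + 1) * (2 * k + 1) = w.choose (2 * k) * (w - 2 * k) :=
      Nat.choose_succ_right_eq w (2 * k)
    have hodd : Odd (w.choose (2 * k) * (w - 2 * k)) := by
      rw [← heq]; exact ho.mul (odd_two_mul_add_one k)
    exact (Nat.odd_mul.mp hodd).1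
  rcases Nat.even_or_odd (w.choose (2 * k)) with ha | ha
  · have hb : Even (w.choose (2 * k + 1)) := by
      by_contra hb
      exact (Nat.not_odd_iff_even.mpr ha) (himp (Nat.not_even_iff_odd.mp hb))
    rw [hp, pow_add, ha.neg_one_pow, hb.neg_one_pow]; ring
  · rw [hp, pow_add, ha.neg_one_pow]; ring

lemma pascal_sum (c : ℕ → ℤ) (n : ℕ) :
    ∑ l ∈ Finset.range (n + 2), c l * (((n + 1).choose l : ℕ) : ℤ)
      = ∑ l ∈ Finset.range (n + 1), (c l + c (l + 1)) * ((n.choose l : ℕ) : ℤ) := by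
  have h2 : ∀ l, c (l + 1) * (((n + 1).choose (l + 1) : ℕ) : ℤ)
      = c (l + 1) * ((n.choose l : ℕ) : ℤ) + c (l + 1) * ((n.choose (l + 1) : ℕ) : ℤ) := by
    intro l
    have : (((n + 1).choose (l + 1) : ℕ) : ℤ)
        = ((n.choose l : ℕ) : ℤ) + ((n.choose (l + 1) : ℕ) : ℤ) := by
      exact_mod_cast congrArg (Nat.cast : ℕ → ℤ) (Nat.choose_succ_succ n l)
    rw [this]; ring
  have h1 : ∑ l ∈ Finset.range (n + 2), c l * (((n + 1).choose l : ℕ) : ℤ)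
      = (∑ l ∈ Finset.range (n + 1), c (l + 1) * (((n + 1).choose (l + 1) : ℕ) : ℤ)) + c 0 := by
    rw [Finset.sum_range_succ']; simp
  have h4 : ∑ l ∈ Finset.range (n + 2), c l * ((n.choose l : ℕ) : ℤ)
      = (∑ l ∈ Finset.range (n + 1), c (l + 1) * ((n.choose (l + 1) : ℕ) : ℤ)) + c 0 := by
    rw [Finset.sum_range_succ']; simp
  have h5 : ∑ l ∈ Finset.range (n + 2), c l * ((n.choose l : ℕ) : ℤ)
      = ∑ l ∈ Finset.range (n + 1), c l * ((n.choose l : ℕ) : ℤ) := by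
    rw [Finset.sum_range_succ, Nat.choose_succ_self]; simp
  have h3 : ∑ l ∈ Finset.range (n + 1), c (l + 1) * ((n.choose (l + 1) : ℕ) : ℤ)
      = (∑ l ∈ Finset.range (n + 1), c l * ((n.choose l : ℕ) : ℤ)) - c 0 := by
    rw [← h5, h4]; ring
  rw [h1, Finset.sum_congr rfl (fun l _ => h2 l), Finset.sum_add_distrib, h3]
  simp only [add_mul, Finset.sum_add_distrib]
  ring

/-- With `A_n = Σ_{l=0}^n (Σ_m C_m(F)(-1)^{Σ_i C(t,i)C(l+m,2k−i)}) C(n,l)` and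
`B_n = Σ_{l=0}^{n+1} (Σ_m C_m(F)(-1)^{Σ_i C(t,i)C(l+m,2k+1−i)}) C(n+1,l)`, so that
`A_n = S([Σ_i C(t,i)σ_{n+j,2k−i}] + F)` and
`B_n = S([Σ_i C(t,i)σ_{n+1+j,2k+1−i}] + F)` whenever these are defined, one has
`A_n = B_n` for every positive `n` if and only if `F` is balanced. -/
theorem perturbation_shift_iff_balanced_general
    (k j t : ℕ) (hk : 1 ≤ k) (hj : 1 ≤ j) (ht : t ≤ 2 * k)
    (F : (Fin j → ZMod 2) → ZMod 2)
    (A B : ℕ → ℤ)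
    (hA : ∀ n : ℕ, A n =
      ∑ l ∈ Finset.range (n + 1),
        (∑ m ∈ Finset.range (j + 1),
          coefC F m * (-1 : ℤ) ^ (∑ i ∈ Finset.range (t + 1),
            Nat.choose t i * Nat.choose (l + m) (2 * k - i))) * (n.choose l : ℤ))
    (hB : ∀ n : ℕ, B n =
      ∑ l ∈ Finset.range (n + 2),
        (∑ m ∈ Finset.range (j + 1),
          coefC F m * (-1 : ℤ) ^ (∑ i ∈ Finset.range (t + 1),
            Nat.choose t i * Nat.choose (l + m) (2 * k + 1 - i))) *
              ((n + 1).choose l : ℤ)) :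
    (∀ n : ℕ, 2 * k ≤ n + j →
      A n = expSum (fun x : Fin (n + j) → ZMod 2 =>
          (∑ i ∈ Finset.range (t + 1),
            (Nat.choose t i : ZMod 2) * sigma (n + j) (2 * k - i) x) +
            F (fun i => x (Fin.castLE (Nat.le_add_left j n) i))) ∧
      B n = expSum (fun x : Fin (n + 1 + j) → ZMod 2 =>
          (∑ i ∈ Finset.range (t + 1),
            (Nat.choose t i : ZMod 2) * sigma (n + 1 + j) (2 * k + 1 - i) x) +
            F (fun i => x (Fin.castLE (Nat.le_add_left j (n + 1)) i)))) ∧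
    ((∀ n : ℕ, 1 ≤ n → A n = B n) ↔ expSum F = 0) := by
  constructor
  · -- part 1
    intro n _
    constructor
    · calc A n = ∑ l ∈ Finset.range (n + 1),
            (∑ m ∈ Finset.range (j + 1),
              coefC F m * (-1 : ℤ) ^ (∑ i ∈ Finset.range (t + 1),
                Nat.choose t i * Nat.choose (l + m) (2 * k - i))) * (n.choose l : ℤ) := hA n
        _ = expSum (fun x : Fin (n + j) → ZMod 2 =>
              ((((∑ i ∈ Finset.range (t + 1),
                Nat.choose t i * Nat.choose (wt x) (2 * k - i)) : ℕ) : ZMod 2))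
                + F (fun i => x (Fin.castLE (Nat.le_add_left j n) i))) :=
          (expSum_split n j
            (fun w => ∑ i ∈ Finset.range (t + 1), Nat.choose t i * Nat.choose w (2 * k - i))
            F).symm
        _ = _ := by
          apply expSum_congr
          intro x
          congr 1
          simp only [Nat.cast_sum, Nat.cast_mul, sigma_eq_choose]
    · calc B n = ∑ l ∈ Finset.range (n + 1 + 1),
            (∑ m ∈ Finset.range (j + 1),
              coefC F m * (-1 : ℤ) ^ (∑ i ∈ Finset.range (t + 1),
                Nat.choose t i * Nat.choose (l + m) (2 * k + 1 - i))) *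
                  ((n + 1).choose l : ℤ) := hB n
        _ = expSum (fun x : Fin (n + 1 + j) → ZMod 2 =>
              ((((∑ i ∈ Finset.range (t + 1),
                Nat.choose t i * Nat.choose (wt x) (2 * k + 1 - i)) : ℕ) : ZMod 2))
                + F (fun i => x (Fin.castLE (Nat.le_add_left j (n + 1)) i))) :=
          (expSum_split (n + 1) j
            (fun w => ∑ i ∈ Finset.range (t + 1), Nat.choose t i * Nat.choose w (2 * k + 1 - i))
            F).symm
        _ = _ := by
          apply expSum_congr
          intro x
          congr 1
          simp only [Nat.cast_sum, Nat.cast_mul, sigma_eq_choose]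
  · -- part 2
    have hSF : ∑ m ∈ Finset.range (j + 1), coefC F m = expSum F := by
      have h := sum_F_fiber F (fun _ => (1 : ℤ))
      simp only [one_mul] at h
      exact h.symm
    have hBA : ∀ n : ℕ, B n = A n + 2 ^ n * expSum F := by
      intro n
      have hA' : A n = ∑ l ∈ Finset.range (n + 1),
          (∑ m ∈ Finset.range (j + 1),
            coefC F m * (-1 : ℤ) ^ ((t + (l + m)).choose (2 * k))) * (n.choose l : ℤ) := by
        rw [hA n]
        apply Finset.sum_congr rfl
        intro l _
        congr 1
        apply Finset.sum_congr rfl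
        intro m _
        rw [vand t (2 * k) (l + m) ht]
      have hB' : B n = ∑ l ∈ Finset.range (n + 2),
          (∑ m ∈ Finset.range (j + 1),
            coefC F m * (-1 : ℤ) ^ ((t + (l + m)).choose (2 * k + 1))) * ((n + 1).choose l : ℤ) := by
        rw [hB n]
        apply Finset.sum_congr rfl
        intro l _
        congr 1
        apply Finset.sum_congr rfl
        intro m _
        rw [vand t (2 * k + 1) (l + m) (by omega)]
      have hstep : ∀ l : ℕ,
          (∑ m ∈ Finset.range (j + 1),
            coefC F m * (-1 : ℤ) ^ ((t + (l + m)).choose (2 * k + 1)))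
          + (∑ m ∈ Finset.range (j + 1),
            coefC F m * (-1 : ℤ) ^ ((t + (l + 1 + m)).choose (2 * k + 1)))
          = (∑ m ∈ Finset.range (j + 1),
            coefC F m * (-1 : ℤ) ^ ((t + (l + m)).choose (2 * k))) + expSum F := by
        intro l
        rw [← hSF, ← Finset.sum_add_distrib, ← Finset.sum_add_distrib]
        apply Finset.sum_congr rfl
        intro m _
        have harg : t + (l + 1 + m) = (t + (l + m)) + 1 := by omega
        rw [harg, ← mul_add, key k (t + (l + m)), mul_add, mul_one]
      calc B n = ∑ l ∈ Finset.range (n + 2),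
            (∑ m ∈ Finset.range (j + 1),
              coefC F m * (-1 : ℤ) ^ ((t + (l + m)).choose (2 * k + 1))) *
                ((n + 1).choose l : ℤ) := hB'
        _ = ∑ l ∈ Finset.range (n + 1),
            ((∑ m ∈ Finset.range (j + 1),
              coefC F m * (-1 : ℤ) ^ ((t + (l + m)).choose (2 * k + 1)))
            + (∑ m ∈ Finset.range (j + 1),
              coefC F m * (-1 : ℤ) ^ ((t + (l + 1 + m)).choose (2 * k + 1)))) *
                (n.choose l : ℤ) :=
          pascal_sum (fun l => ∑ m ∈ Finset.range (j + 1),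
            coefC F m * (-1 : ℤ) ^ ((t + (l + m)).choose (2 * k + 1))) n
        _ = ∑ l ∈ Finset.range (n + 1),
            ((∑ m ∈ Finset.range (j + 1),
              coefC F m * (-1 : ℤ) ^ ((t + (l + m)).choose (2 * k))) + expSum F) *
                (n.choose l : ℤ) :=
          Finset.sum_congr rfl (fun l _ => by rw [hstep l])
        _ = A n + 2 ^ n * expSum F := by
          simp only [add_mul, Finset.sum_add_distrib]
          rw [← hA']
          congr 1
          have hc : ∑ l ∈ Finset.range (n + 1), (n.choose l : ℤ) = 2 ^ n := by
            have := congrArg (Nat.cast : ℕ → ℤ) (Nat.sum_range_choose n)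
            push_cast at this
            exact this
          rw [← Finset.mul_sum, hc]
          ring
    constructor
    · intro h
      have h1 := h 1 le_rfl
      have h2 := hBA 1
      rw [← h1] at h2
      have : (2 : ℤ) ^ 1 * expSum F = 0 := by linarith
      linarith
    · intro h n _
      rw [hBA n, h]
      ring
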